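/- Let π be a noncrossing perfect matching of {1,…,2k}. Say π contains the forbidden pattern if there exist three arcs (i₁,j₁), (i₂,j₂), (i₃,j₃) of π with i₁ < i₂ < j₂ < i₃ < j₃ < j₁ (one arc containing two disjoint arcs). Say π is a series of nested arcs if its arcs can be partitioned into groups, each group totally ordered by nesting (any two arcs in the same group are nested), with the intervals spanned by distinct groups pairwise disjoint. Then π avoids the forbidden pattern if and only if π is a series of nested arcs. -/

import Mathlib

/-- A noncrossing perfect matching of `{1,…,2k}`. -/
def IsNCPerfectMatching (k : ℕ) (M : Finset (ℕ × ℕ)) : Prop :=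
  (∀ p ∈ M, 1 ≤ p.1 ∧ p.1 < p.2 ∧ p.2 ≤ 2 * k) ∧
  (∀ v : ℕ, 1 ≤ v → v ≤ 2 * k → ∃! p : ℕ × ℕ, p ∈ M ∧ (p.1 = v ∨ p.2 = v)) ∧
  (∀ p ∈ M, ∀ q ∈ M, ¬ (p.1 < q.1 ∧ q.1 < p.2 ∧ p.2 < q.2))

/-- Two arcs are nested if one lies strictly inside the other. -/
def Nested (p q : ℕ × ℕ) : Prop :=
  (q.1 < p.1 ∧ p.2 < q.2) ∨ (p.1 < q.1 ∧ q.2 < p.2)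

/-- The forbidden pattern: an arc containing two disjoint arcs. -/
def ContainsForbidden (M : Finset (ℕ × ℕ)) : Prop :=
  ∃ a ∈ M, ∃ b ∈ M, ∃ c ∈ M, a.1 < b.1 ∧ b.2 < c.1 ∧ c.2 < a.2

/-- `M` is a series of nested arcs: arcs can be grouped so that arcs in the same
group are nested, and the intervals spanned by distinct groups are disjoint. -/
def SeriesOfNestedArcs (M : Finset (ℕ × ℕ)) : Prop :=
  ∃ g : ℕ × ℕ → ℕ, ∀ p ∈ M, ∀ q ∈ M, p ≠ q →
    (g p = g q → Nested p q) ∧ (g p ≠ g q → (p.2 < q.1 ∨ q.2 < p.1))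

/-- A noncrossing perfect matching avoids the forbidden pattern iff it is a
series of nested arcs. -/
theorem stmt13 (k : ℕ) (M : Finset (ℕ × ℕ)) (h : IsNCPerfectMatching k M) :
    ¬ ContainsForbidden M ↔ SeriesOfNestedArcs M := by
  classical
  obtain ⟨hb, hu, hnc⟩ := h
  -- two arcs sharing a vertex are equal
  have touch : ∀ p ∈ M, ∀ q ∈ M, ∀ v : ℕ,
      (p.1 = v ∨ p.2 = v) → (q.1 = v ∨ q.2 = v) → p = q := by
    intro p hp q hq v hpv hqv
    have hp' := hb p hp
    have hv1 : 1 ≤ v := by rcases hpv with h' | h' <;> omega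
    have hv2 : v ≤ 2 * k := by rcases hpv with h' | h' <;> omega
    obtain ⟨r, _, hr2⟩ := hu v hv1 hv2
    rw [hr2 p ⟨hp, hpv⟩, hr2 q ⟨hq, hqv⟩]
  -- overlapping arcs are nested
  have nested_of : ∀ a ∈ M, ∀ b ∈ M, a.1 < b.1 → b.1 < a.2 → b.2 < a.2 := by
    intro a ha b hB h1 h2
    rcases lt_trichotomy b.2 a.2 with h3 | h3 | h3
    · exact h3
    · have := touch a ha b hB a.2 (Or.inr rfl) (Or.inr h3)
      subst this; omega
    · exact absurd ⟨h1, h2, h3⟩ (hnc a ha b hB)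
  constructor
  · intro hforb
    -- arcs contained in a common arc, with p.1 < q.1, are nested
    have nest : ∀ p ∈ M, ∀ q ∈ M, ∀ o ∈ M, p.1 < q.1 →
        o.1 ≤ p.1 → p.2 ≤ o.2 → o.1 ≤ q.1 → q.2 ≤ o.2 → q.2 < p.2 := by
      intro p hp q hq o ho hlt hop1 hop2 hoq1 hoq2
      rcases lt_trichotomy q.1 p.2 with h1 | h1 | h1
      · exact nested_of p hp q hq hlt h1
      · have := touch p hp q hq p.2 (Or.inr rfl) (Or.inl h1)
        subst this; omega
      · -- p and q disjoint inside o : forbidden pattern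
        exfalso
        have hq' := hb q hq
        have hop1' : o.1 < p.1 := by
          rcases lt_or_eq_of_le hop1 with h' | h'
          · exact h'
          · have : o = p := touch o ho p hp o.1 (Or.inl rfl) (Or.inl h'.symm)
            subst this; omega
        have hoq2' : q.2 < o.2 := by
          rcases lt_or_eq_of_le hoq2 with h' | h'
          · exact h'
          · have : o = q := touch o ho q hq q.2 (Or.inr h'.symm) (Or.inr rfl)
            subst this; omega
        exact hforb ⟨o, ho, p, hp, q, hq, hop1', h1, hoq2'⟩
    refine ⟨fun p =>
      ((M.filter (fun o => o.1 ≤ p.1 ∧ p.2 ≤ o.2)).image Prod.fst).min.untopD 0, ?_⟩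
    intro p hp q hq hpq
    have hpSp : p ∈ M.filter (fun o => o.1 ≤ p.1 ∧ p.2 ≤ o.2) := by
      simp [Finset.mem_filter, hp]
    have hqSq : q ∈ M.filter (fun o => o.1 ≤ q.1 ∧ q.2 ≤ o.2) := by
      simp [Finset.mem_filter, hq]
    have hNp : (M.filter (fun o => o.1 ≤ p.1 ∧ p.2 ≤ o.2)).Nonempty := ⟨p, hpSp⟩
    have hNq : (M.filter (fun o => o.1 ≤ q.1 ∧ q.2 ≤ o.2)).Nonempty := ⟨q, hqSq⟩
    obtain ⟨mp, hmp⟩ := Finset.min_of_nonempty (hNp.image Prod.fst)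
    obtain ⟨mq, hmq⟩ := Finset.min_of_nonempty (hNq.image Prod.fst)
    obtain ⟨op, hopS, hope⟩ := Finset.mem_image.mp (Finset.mem_of_min hmp)
    obtain ⟨oq, hoqS, hoqe⟩ := Finset.mem_image.mp (Finset.mem_of_min hmq)
    have hgp : ((M.filter (fun o => o.1 ≤ p.1 ∧ p.2 ≤ o.2)).image Prod.fst).min.untopD 0 = mp := by
      rw [hmp]; rfl
    have hgq : ((M.filter (fun o => o.1 ≤ q.1 ∧ q.2 ≤ o.2)).image Prod.fst).min.untopD 0 = mq := by
      rw [hmq]; rfl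
    rw [Finset.mem_filter] at hopS hoqS
    obtain ⟨hopM, hop1, hop2⟩ := hopS
    obtain ⟨hoqM, hoq1, hoq2⟩ := hoqS
    beta_reduce
    rw [hgp, hgq]
    constructor
    · intro hg
      have hoo : op = oq := by
        apply touch op hopM oq hoqM op.1 (Or.inl rfl)
        left
        rw [hope, hg, ← hoqe]
      subst hoo
      rcases lt_trichotomy p.1 q.1 with h1 | h1 | h1
      · exact Or.inr ⟨h1, nest p hp q hq op hopM h1 hop1 hop2 hoq1 hoq2⟩
      · exact absurd (touch p hp q hq p.1 (Or.inl rfl) (Or.inl h1.symm)) hpq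
      · exact Or.inl ⟨h1, nest q hq p hp op hopM h1 hoq1 hoq2 hop1 hop2⟩
    · intro hg
      have hne : op.1 ≠ oq.1 := by
        intro he
        exact hg (by rw [← hope, ← hoqe, he])
      rcases lt_trichotomy op.1 oq.1 with h1 | h1 | h1
      · -- show p.2 < q.1
        left
        rcases lt_trichotomy op.2 oq.1 with h2 | h2 | h2
        · omega
        · have := touch op hopM oq hoqM op.2 (Or.inr rfl) (Or.inl h2.symm)
          subst this; omega
        · exfalso
          have h3 : oq.2 < op.2 := nested_of op hopM oq hoqM h1 h2
          have hmem : op.1 ∈ (M.filter (fun o => o.1 ≤ q.1 ∧ q.2 ≤ o.2)).image Prod.fst :=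
            Finset.mem_image_of_mem _
              (Finset.mem_filter.mpr ⟨hopM, by omega, by omega⟩)
          have hle := Finset.min_le hmem
          rw [hmq] at hle
          have : mq ≤ op.1 := by exact_mod_cast hle
          omega
      · exact absurd h1 hne
      · right
        rcases lt_trichotomy oq.2 op.1 with h2 | h2 | h2
        · omega
        · have := touch op hopM oq hoqM op.1 (Or.inl rfl) (Or.inr h2)
          subst this; omega
        · exfalso
          have h3 : op.2 < oq.2 := nested_of oq hoqM op hopM h1 h2
          have hmem : oq.1 ∈ (M.filter (fun o => o.1 ≤ p.1 ∧ p.2 ≤ o.2)).image Prod.fst :=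
            Finset.mem_image_of_mem _
              (Finset.mem_filter.mpr ⟨hoqM, by omega, by omega⟩)
          have hle := Finset.min_le hmem
          rw [hmp] at hle
          have : mp ≤ oq.1 := by exact_mod_cast hle
          omega
  · rintro ⟨g, hg⟩ ⟨a, ha, b, hB, c, hc, h1, h2, h3⟩
    have hA := hb a ha
    have hBB := hb b hB
    have hC := hb c hc
    have hab : a ≠ b := fun he => by rw [he] at h1; omega
    have hbc : b ≠ c := fun he => by rw [he] at h2; omega
    have hac : a ≠ c := fun he => by rw [he] at h3; omega
    have hgab : g a = g b := by
      by_contra hne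
      rcases (hg a ha b hB hab).2 hne with h' | h' <;> omega
    have hgac : g a = g c := by
      by_contra hne
      rcases (hg a ha c hc hac).2 hne with h' | h' <;> omega
    have hn : Nested b c := (hg b hB c hc hbc).1 (by rw [← hgab, hgac])
    rcases hn with ⟨h4, h5⟩ | ⟨h4, h5⟩ <;> omega
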